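/- Adapted Wasserstein bound for adapted additive perturbations: let Z = (Z_t)_{t=1}^T with Z_t ℱ_t^X-measurable and ∑_{t=1}^T E_P[|Z_t|^p] ≤ 1, and for r > 0 let Q^r be the law of X + rZ under P. Then for every n ∈ ℕ there exists Q^{r,n} ∈ 𝒫_p(ℝ^T) with 𝒜𝒲_p(P, Q^{r,n}) ≤ r + T/n and 𝒲_p(Q^{r,n}, Q^r) ≤ T^{1/p}/n, where 𝒲_p is the ordinary Wasserstein distance. In particular, for any ε > 0, Q^{r,n} ∈ B_{r+ε}(P) for n large enough. -/

import Mathlib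

open MeasureTheory ProbabilityTheory Filter Set

noncomputable section

abbrev PathSp (T : ℕ) := Fin T → ℝ

/-- σ-algebra generated by the first `t` coordinates `X_1,…,X_t` on path space. -/
def FX (T t : ℕ) : MeasurableSpace (PathSp T) :=
  ⨆ i : Fin T, ⨆ _ : (i : ℕ) < t, MeasurableSpace.comap (fun x => x i) inferInstance

def prodX (T t : ℕ) : MeasurableSpace (PathSp T × PathSp T) := (FX T t).comap Prod.fst

def prodY (T t : ℕ) : MeasurableSpace (PathSp T × PathSp T) := (FX T t).comap Prod.snd

def prodXY (T t : ℕ) : MeasurableSpace (PathSp T × PathSp T) := prodX T t ⊔ prodY T t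

def IsCoupling {T : ℕ} (π : Measure (PathSp T × PathSp T)) (P Q : Measure (PathSp T)) : Prop :=
  π.map Prod.fst = P ∧ π.map Prod.snd = Q

/-- Causality of a coupling: conditionally on `X_1,…,X_t`, the variables `Y_1,…,Y_t`
are independent of `X_1,…,X_T`. -/
def Causal (T : ℕ) (π : Measure (PathSp T × PathSp T)) : Prop :=
  ∀ t ≤ T, ∀ A : Set (PathSp T), MeasurableSet[FX T t] A →
    (π[fun z => A.indicator (fun _ => (1:ℝ)) z.2 | prodX T T]) =ᵐ[π]
    (π[fun z => A.indicator (fun _ => (1:ℝ)) z.2 | prodX T t])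

def Bicausal (T : ℕ) (π : Measure (PathSp T × PathSp T)) : Prop :=
  Causal T π ∧ ∀ t ≤ T, ∀ A : Set (PathSp T), MeasurableSet[FX T t] A →
    (π[fun z => A.indicator (fun _ => (1:ℝ)) z.1 | prodY T T]) =ᵐ[π]
    (π[fun z => A.indicator (fun _ => (1:ℝ)) z.1 | prodY T t])

/-- `P` has a finite `p`-th moment. -/
def FiniteMoment {T : ℕ} (p : ℝ) (P : Measure (PathSp T)) : Prop :=
  ∀ t : Fin T, MemLp (fun x => x t) (ENNReal.ofReal p) P

/-- The adapted Wasserstein distance of order `p`. -/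
def AW (T : ℕ) (p : ℝ) (P Q : Measure (PathSp T)) : ℝ :=
  sInf { r | ∃ π : Measure (PathSp T × PathSp T), IsCoupling π P Q ∧ Bicausal T π ∧
    r = (∑ t : Fin T, ∫ z, |z.1 t - z.2 t| ^ p ∂π) ^ (1 / p) }

/-- The closed ball of radius `r` around `P` in the adapted Wasserstein distance,
within the set of probability measures with finite `p`-th moment. -/
def AWball (T : ℕ) (p : ℝ) (P : Measure (PathSp T)) (r : ℝ) : Set (Measure (PathSp T)) :=
  { Q | IsProbabilityMeasure Q ∧ FiniteMoment p Q ∧ AW T p P Q ≤ r }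

/-- Partial derivative `∂_{x_t} f`. -/
def pd {T : ℕ} (f : PathSp T → ℝ) (x : PathSp T) (t : Fin T) : ℝ :=
  fderiv ℝ f x (Pi.single t 1)

/-- Ordinary Wasserstein distance of order p on path space. -/
def Wp (T : ℕ) (p : ℝ) (P Q : Measure (PathSp T)) : ℝ :=
  sInf { r | ∃ π : Measure (PathSp T × PathSp T), IsCoupling π P Q ∧
    r = (∑ t : Fin T, ∫ z, |z.1 t - z.2 t| ^ p ∂π) ^ (1 / p) }

open Real (arctan tan pi_pos neg_pi_div_two_lt_arctan arctan_lt_pi_div_two tan_arctan tan_eq_sin_div_cos)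
open scoped ENNReal NNReal

lemma comap_le_FX {T t : ℕ} {i : Fin T} (h : (i:ℕ) < t) :
    MeasurableSpace.comap (fun x : PathSp T => x i) inferInstance ≤ FX T t := by
  apply le_iSup_of_le i; exact le_iSup_of_le h le_rfl

lemma FX_mono {T : ℕ} {s t : ℕ} (h : s ≤ t) : FX T s ≤ FX T t :=
  iSup_le fun i => iSup_le fun hi => comap_le_FX (lt_of_lt_of_le hi h)

lemma FX_le_pi {T t : ℕ} : FX T t ≤ (inferInstance : MeasurableSpace (PathSp T)) :=
  iSup_le fun i => iSup_le fun _ => (measurable_pi_apply i).comap_le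

lemma measurable_coord_FX {T t : ℕ} {i : Fin T} (h : (i:ℕ) < t) :
    Measurable[FX T t] fun x : PathSp T => x i :=
  measurable_iff_comap_le.2 (comap_le_FX h)

lemma measurable_into_FX {T t : ℕ} {α : Type*} {mα : MeasurableSpace α} {f : α → PathSp T}
    (h : ∀ i : Fin T, (i:ℕ) < t → Measurable[mα] fun x => f x i) :
    Measurable[mα, FX T t] f := by
  rw [measurable_iff_comap_le, FX, MeasurableSpace.comap_iSup]
  refine iSup_le fun i => ?_
  rw [MeasurableSpace.comap_iSup]
  refine iSup_le fun hi => ?_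
  rw [MeasurableSpace.comap_comp]
  exact measurable_iff_comap_le.1 (h i hi)

def psiF (δ b : ℝ) : ℝ := δ * (1/2 + arctan b / Real.pi)
def phiF (δ a : ℝ) : ℝ := δ * ⌊a / δ⌋
def gF (δ c : ℝ) : ℝ := tan (Real.pi * ((c - phiF δ c)/δ - 1/2))

lemma psiF_frac {b : ℝ} : 1/2 + arctan b / Real.pi ∈ Ioo (0:ℝ) 1 := by
  have h1 : -(Real.pi/2) < arctan b := neg_pi_div_two_lt_arctan b
  have h2 : arctan b < Real.pi/2 := arctan_lt_pi_div_two b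
  have hpi := pi_pos
  constructor
  · have : -(1/2) < arctan b / Real.pi := by rw [lt_div_iff₀ hpi]; nlinarith
    linarith
  · have : arctan b / Real.pi < 1/2 := by rw [div_lt_iff₀ hpi]; nlinarith
    linarith

lemma psiF_mem {δ : ℝ} (hδ : 0 < δ) (b : ℝ) : psiF δ b ∈ Ioo 0 δ :=
  ⟨mul_pos hδ psiF_frac.1, by
    calc δ * (1/2 + arctan b / Real.pi) < δ * 1 := by
          exact (mul_lt_mul_iff_right₀ hδ).2 psiF_frac.2
    _ = δ := mul_one δ⟩

lemma phiF_le {δ : ℝ} (hδ : 0 < δ) (a : ℝ) : phiF δ a ≤ a ∧ a - phiF δ a < δ := by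
  have h1 : (⌊a / δ⌋ : ℝ) ≤ a / δ := Int.floor_le _
  have h2 : a / δ < ⌊a / δ⌋ + 1 := Int.lt_floor_add_one _
  have key : δ * (a / δ) = a := mul_div_cancel₀ a (ne_of_gt hδ)
  constructor
  · rw [phiF]
    nlinarith [mul_le_mul_of_nonneg_left h1 hδ.le]
  · rw [phiF]
    nlinarith [mul_lt_mul_of_pos_left h2 hδ]

lemma gF_eq {δ : ℝ} (hδ : 0 < δ) (a b : ℝ) : gF δ (phiF δ a + psiF δ b) = b := by
  have hfrac := psiF_frac (b := b)
  have hφ : phiF δ (phiF δ a + psiF δ b) = phiF δ a := by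
    rw [phiF, phiF, psiF]
    have : (δ * ⌊a / δ⌋ + δ * (1/2 + arctan b / Real.pi)) / δ
        = (⌊a / δ⌋ : ℝ) + (1/2 + arctan b / Real.pi) := by
      field_simp
    rw [this, Int.floor_intCast_add, Int.floor_eq_zero_iff.2 ⟨le_of_lt hfrac.1, hfrac.2⟩]
    simp
  rw [gF, hφ]
  have : (phiF δ a + psiF δ b - phiF δ a) / δ - 1/2 = arctan b / Real.pi := by
    rw [psiF]; field_simp; ring
  rw [this]
  rw [mul_div_cancel₀ _ (ne_of_gt pi_pos), tan_arctan]

lemma measurable_psiF {δ : ℝ} : Measurable (psiF δ) := by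
  unfold psiF
  exact (measurable_const.add ((Real.continuous_arctan.measurable).div_const _)).const_mul _

lemma measurable_phiF {δ : ℝ} : Measurable (phiF δ) := by
  unfold phiF
  have h1 : Measurable fun a : ℝ => ⌊a / δ⌋ := Measurable.floor (measurable_id.div_const _)
  have h2 : Measurable fun z : ℤ => (z : ℝ) := fun _ _ => trivial
  exact (h2.comp h1).const_mul _

lemma measurable_gF {δ : ℝ} : Measurable (gF δ) := by
  unfold gF
  have htan : Measurable tan := by
    have : tan = fun x => Real.sin x / Real.cos x := funext fun x => tan_eq_sin_div_cos x
    rw [this]; exact Real.measurable_sin.div Real.measurable_cos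
  exact htan.comp ((((measurable_id.sub measurable_phiF).div_const _).sub
    measurable_const).const_mul _)

section YM
variable (T : ℕ) (r : ℝ) (Z : Fin T → PathSp T → ℝ) (δ : ℝ)

def Ymap : PathSp T → PathSp T := fun x t => phiF δ (x t + r * Z t x) + psiF δ (x t)

def Rmap : PathSp T → PathSp T := fun y t => gF δ (y t)

variable {T r Z δ}

lemma Rmap_Ymap (hδ : 0 < δ) (x : PathSp T) : Rmap T δ (Ymap T r Z δ x) = x := by
  funext t
  simp only [Rmap, Ymap, gF_eq hδ]

lemma Ymap_coord_meas (hZ : ∀ t : Fin T, Measurable[FX T ((t:ℕ)+1)] (Z t))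
    {t : ℕ} {i : Fin T} (hi : (i:ℕ) < t) :
    Measurable[FX T t] fun x => Ymap T r Z δ x i := by
  have hxi : Measurable[FX T t] fun x : PathSp T => x i := measurable_coord_FX hi
  have hZi : Measurable[FX T t] (Z i) := (hZ i).mono (FX_mono hi) le_rfl
  exact (measurable_phiF.comp (hxi.add (hZi.const_mul r))).add (measurable_psiF.comp hxi)

lemma Ymap_meas_FX (hZ : ∀ t : Fin T, Measurable[FX T ((t:ℕ)+1)] (Z t)) (t : ℕ) :
    Measurable[FX T t, FX T t] (Ymap T r Z δ) :=
  measurable_into_FX fun i hi => Ymap_coord_meas hZ hi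

lemma Ymap_meas (hZ : ∀ t : Fin T, Measurable[FX T ((t:ℕ)+1)] (Z t)) :
    Measurable (Ymap T r Z δ) := by
  have := Ymap_meas_FX (r := r) (δ := δ) hZ T
  refine measurable_pi_iff.2 fun i => ?_
  have hxi : Measurable fun x : PathSp T => x i := measurable_pi_apply i
  have hZi : Measurable (Z i) := (hZ i).mono FX_le_pi le_rfl
  exact (measurable_phiF.comp (hxi.add (hZi.const_mul r))).add (measurable_psiF.comp hxi)

lemma Rmap_coord_meas {t : ℕ} {i : Fin T} (hi : (i:ℕ) < t) :
    Measurable[FX T t] fun y => Rmap T δ y i :=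
  measurable_gF.comp (measurable_coord_FX hi)

lemma Rmap_meas_FX (t : ℕ) : Measurable[FX T t, FX T t] (Rmap T δ) :=
  measurable_into_FX fun i hi => Rmap_coord_meas hi

lemma Rmap_meas : Measurable (Rmap T δ) :=
  measurable_pi_iff.2 fun i => measurable_gF.comp (measurable_pi_apply i)

lemma Ymap_dist (hδ : 0 < δ) (x : PathSp T) (t : Fin T) :
    |Ymap T r Z δ x t - (x t + r * Z t x)| ≤ 2 * δ := by
  have h1 := phiF_le hδ (x t + r * Z t x)
  have h2 := psiF_mem hδ (x t)
  rw [Ymap]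
  rw [abs_le]
  constructor <;> [skip; skip] <;>
  · simp only [mem_Ioo] at h2; cases h1; cases h2; linarith

lemma Ymap_dist' (hδ : 0 < δ) (hr : 0 ≤ r) (x : PathSp T) (t : Fin T) :
    |x t - Ymap T r Z δ x t| ≤ r * |Z t x| + 2 * δ := by
  have h := Ymap_dist (r := r) (Z := Z) hδ x t
  have key : x t - Ymap T r Z δ x t
      = -(r * Z t x) - (Ymap T r Z δ x t - (x t + r * Z t x)) := by ring
  calc |x t - Ymap T r Z δ x t|
      = |-(r * Z t x) - (Ymap T r Z δ x t - (x t + r * Z t x))| := by rw [key]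
    _ ≤ |-(r * Z t x)| + |Ymap T r Z δ x t - (x t + r * Z t x)| := abs_sub _ _
    _ ≤ r * |Z t x| + 2 * δ := by
        rw [abs_neg, abs_mul, abs_of_nonneg hr]; linarith

end YM

lemma condexp_factor {Ω : Type*} [m0 : MeasurableSpace Ω] (pp : Measure Ω) [IsProbabilityMeasure pp]
    (m m' : MeasurableSpace Ω) (hmm' : m ≤ m') (hm' : m' ≤ m0)
    {h f : Ω → ℝ} (hf : StronglyMeasurable[m] f) (hhf : h =ᵐ[pp] f) (hfi : Integrable f pp) :
    pp[h|m'] =ᵐ[pp] pp[h|m] := by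
  have hm : m ≤ m0 := hmm'.trans hm'
  calc pp[h|m'] =ᵐ[pp] pp[f|m'] := condExp_congr_ae hhf
    _ = f := condExp_of_stronglyMeasurable hm' (hf.mono hmm') hfi
    _ = pp[f|m] := (condExp_of_stronglyMeasurable hm hf hfi).symm
    _ =ᵐ[pp] pp[h|m] := condExp_congr_ae hhf.symm

section BC
variable {T : ℕ} {r δ : ℝ} {Z : Fin T → PathSp T → ℝ}
variable (P : Measure (PathSp T)) [IsProbabilityMeasure P]

lemma prodX_le_prod (t : ℕ) : prodX T t ≤ (inferInstance : MeasurableSpace (PathSp T × PathSp T)) :=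
  (MeasurableSpace.comap_mono FX_le_pi).trans measurable_fst.comap_le

lemma prodY_le_prod (t : ℕ) : prodY T t ≤ (inferInstance : MeasurableSpace (PathSp T × PathSp T)) :=
  (MeasurableSpace.comap_mono FX_le_pi).trans measurable_snd.comap_le

lemma ae_snd_eq (hZ : ∀ t : Fin T, Measurable[FX T ((t:ℕ)+1)] (Z t)) :
    ∀ᵐ z ∂(P.map (fun x => (x, Ymap T r Z δ x))), z.2 = Ymap T r Z δ z.1 := by
  have he : Measurable fun x : PathSp T => (x, Ymap T r Z δ x) :=
    measurable_id.prodMk (Ymap_meas hZ)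
  have hE : MeasurableSet {z : PathSp T × PathSp T | z.2 = Ymap T r Z δ z.1} := by
    have : {z : PathSp T × PathSp T | z.2 = Ymap T r Z δ z.1}
        = ⋂ t : Fin T, {z | z.2 t = Ymap T r Z δ z.1 t} := by
      ext z; simp [funext_iff]
    rw [this]
    refine MeasurableSet.iInter fun t : Fin T => ?_
    exact measurableSet_eq_fun
      (f := fun z : PathSp T × PathSp T => z.2 t)
      (g := fun z : PathSp T × PathSp T => Ymap T r Z δ z.1 t)
      (by exact (measurable_pi_apply t).comp measurable_snd)
      (by exact ((Ymap_meas hZ).comp measurable_fst).eval)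
  rw [MeasureTheory.ae_map_iff he.aemeasurable hE]
  filter_upwards with x
  rfl

lemma ae_fst_eq (hZ : ∀ t : Fin T, Measurable[FX T ((t:ℕ)+1)] (Z t)) (hδ : 0 < δ) :
    ∀ᵐ z ∂(P.map (fun x => (x, Ymap T r Z δ x))), z.1 = Rmap T δ z.2 := by
  filter_upwards [ae_snd_eq P hZ] with z hz
  rw [hz, Rmap_Ymap hδ]

lemma bicausal_graph (hZ : ∀ t : Fin T, Measurable[FX T ((t:ℕ)+1)] (Z t)) (hδ : 0 < δ) :
    Bicausal T (P.map (fun x => (x, Ymap T r Z δ x))) := by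
  set pp := P.map (fun x => (x, Ymap T r Z δ x)) with hpp
  have he : Measurable fun x : PathSp T => (x, Ymap T r Z δ x) :=
    measurable_id.prodMk (Ymap_meas hZ)
  have : IsProbabilityMeasure pp := Measure.isProbabilityMeasure_map he.aemeasurable
  constructor
  · intro t ht A hA
    set f : PathSp T → ℝ := (Ymap T r Z δ ⁻¹' A).indicator (fun _ => (1:ℝ)) with hfdef
    have hfm : Measurable[FX T t] f :=
      measurable_const.indicator (Ymap_meas_FX hZ t hA)
    have hfst : Measurable[prodX T t, FX T t] (Prod.fst : PathSp T × PathSp T → PathSp T) :=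
      measurable_iff_comap_le.2 le_rfl
    refine condexp_factor pp (prodX T t) (prodX T T)
      (MeasurableSpace.comap_mono (FX_mono ht)) (prodX_le_prod T)
      (f := f ∘ Prod.fst) ((hfm.comp hfst).stronglyMeasurable) ?_ ?_
    · filter_upwards [ae_snd_eq P hZ] with z hz
      simp only [hz]; rfl
    · have : f ∘ Prod.fst
          = (Prod.fst ⁻¹' (Ymap T r Z δ ⁻¹' A) :
              Set (PathSp T × PathSp T)).indicator (fun _ => (1:ℝ)) := by
        funext z; rfl
      rw [this]
      exact (integrable_const (1:ℝ)).indicator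
        (measurable_fst (FX_le_pi _ (Ymap_meas_FX hZ t hA)))
  · intro t ht A hA
    set f : PathSp T → ℝ := (Rmap T δ ⁻¹' A).indicator (fun _ => (1:ℝ)) with hfdef
    have hfm : Measurable[FX T t] f :=
      measurable_const.indicator (Rmap_meas_FX t hA)
    have hsnd : Measurable[prodY T t, FX T t] (Prod.snd : PathSp T × PathSp T → PathSp T) :=
      measurable_iff_comap_le.2 le_rfl
    refine condexp_factor pp (prodY T t) (prodY T T)
      (MeasurableSpace.comap_mono (FX_mono ht)) (prodY_le_prod T)
      (f := f ∘ Prod.snd) ((hfm.comp hsnd).stronglyMeasurable) ?_ ?_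
    · filter_upwards [ae_fst_eq P hZ hδ] with z hz
      simp only [hz]; rfl
    · have : f ∘ Prod.snd
          = (Prod.snd ⁻¹' (Rmap T δ ⁻¹' A) :
              Set (PathSp T × PathSp T)).indicator (fun _ => (1:ℝ)) := by
        funext z; rfl
      rw [this]
      exact (integrable_const (1:ℝ)).indicator
        (measurable_snd (FX_le_pi _ (Rmap_meas_FX t hA)))

end BC

lemma lint_eq_ofReal_integral {α : Type*} [MeasurableSpace α] {P : Measure α} {p : ℝ}
    (hp : 0 < p) {w : α → ℝ} (hw : MemLp w (ENNReal.ofReal p) P) :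
    ∫⁻ x, (‖w x‖₊ : ℝ≥0∞) ^ p ∂P = ENNReal.ofReal (∫ x, |w x| ^ p ∂P) := by
  have hint : Integrable (fun x => |w x| ^ p) P := by
    have := hw.integrable_norm_rpow (by simp [ENNReal.ofReal_pos, hp, ne_of_gt])
      ENNReal.ofReal_ne_top
    simpa [ENNReal.toReal_ofReal hp.le, Real.norm_eq_abs] using this
  rw [ofReal_integral_eq_lintegral_ofReal hint
    (Filter.Eventually.of_forall fun x => Real.rpow_nonneg (abs_nonneg _) p)]
  congr 1
  funext x
  rw [← ENNReal.ofReal_rpow_of_nonneg (abs_nonneg _) hp.le, ← Real.norm_eq_abs,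
    ofReal_norm, enorm_eq_nnnorm]

lemma sum_rpow_minkowski {α : Type*} [MeasurableSpace α] (P : Measure α) [IsProbabilityMeasure P]
    {T : ℕ} {p : ℝ} (hp : 1 ≤ p)
    (u v : Fin T → α → ℝ) (c : ℝ) (hc : 0 ≤ c)
    (hu : ∀ i, Measurable (u i)) (hv : ∀ i, Measurable (v i))
    (hvL : ∀ i, MemLp (v i) (ENNReal.ofReal p) P)
    (hbound : ∀ i x, |u i x| ≤ |v i x| + c) :
    (∑ i, ∫ x, |u i x| ^ p ∂P) ^ (1/p) ≤
      (∑ i, ∫ x, |v i x| ^ p ∂P) ^ (1/p) + c * (T : ℝ) ^ (1/p) := by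
  have hp0 : 0 < p := lt_of_lt_of_le one_pos hp
  rcases Nat.eq_zero_or_pos T with hT | hT
  · subst hT
    simp [Real.zero_rpow (by positivity : 1/p ≠ 0)]
    positivity
  -- the combined measure on α × Fin T
  set μ' : Measure (α × Fin T) := Measure.sum (fun i : Fin T => P.map (fun x => (x, i))) with hμ'
  have hmk : ∀ i : Fin T, Measurable fun x : α => (x, i) :=
    fun i => measurable_id.prodMk measurable_const
  have hlint : ∀ {h : α × Fin T → ℝ≥0∞}, Measurable h →
      ∫⁻ z, h z ∂μ' = ∑ i, ∫⁻ x, h (x, i) ∂P := by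
    intro h hh
    rw [hμ', lintegral_sum_measure, tsum_fintype]
    exact Finset.sum_congr rfl fun i _ => lintegral_map hh (hmk i)
  have hμ'univ : μ' univ = (T : ℝ≥0∞) := by
    rw [hμ', Measure.sum_apply _ MeasurableSet.univ, tsum_fintype]
    simp [Measure.map_apply (hmk _) MeasurableSet.univ]
  have hμ'ne : μ' ≠ 0 := by
    intro h0
    have h0' : ((T:ℝ≥0∞)) = 0 := by rw [← hμ'univ, h0]; simp
    simp at h0'
    omega
  set pe := ENNReal.ofReal p with hpe
  have hpe0 : pe ≠ 0 := by simp [hpe, ENNReal.ofReal_pos, hp0, ne_of_gt]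
  have hpet : pe ≠ ⊤ := ENNReal.ofReal_ne_top
  have hpetR : pe.toReal = p := ENNReal.toReal_ofReal hp0.le
  -- functions on the product
  set U : α × Fin T → ℝ := fun z => u z.2 z.1 with hU
  set V : α × Fin T → ℝ := fun z => |v z.2 z.1| + c with hV
  have hUm : Measurable U := measurable_from_prod_countable_left fun i => hu i
  have hVm : Measurable V :=
    (measurable_from_prod_countable_left fun i => (hv i).abs).add measurable_const
  have hCm : Measurable (fun _ : α × Fin T => c) := measurable_const
  -- Minkowski
  have step1 : eLpNorm U pe μ' ≤ eLpNorm V pe μ' :=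
    eLpNorm_mono_real fun z => by
      simpa [hU, hV, Real.norm_eq_abs] using hbound z.2 z.1
  have step2 : eLpNorm V pe μ' ≤
      eLpNorm (fun z => |v z.2 z.1|) pe μ' + eLpNorm (fun _ : α × Fin T => c) pe μ' := by
    have := eLpNorm_add_le (μ := μ')
      (f := fun z : α × Fin T => |v z.2 z.1|) (g := fun _ => c)
      ((measurable_from_prod_countable_left fun i => (hv i).abs).aestronglyMeasurable)
      hCm.aestronglyMeasurable (ENNReal.one_le_ofReal.2 hp)
    exact this
  -- identify the eLpNorms
  have hVint : ∀ i, MemLp (fun x => |v i x|) pe P := fun i => (hvL i).abs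
  have keyV : eLpNorm (fun z : α × Fin T => |v z.2 z.1|) pe μ'
      = (ENNReal.ofReal (∑ i, ∫ x, |v i x| ^ p ∂P)) ^ (1/p) := by
    rw [eLpNorm_eq_lintegral_rpow_enorm_toReal hpe0 hpet, hpetR]; simp only [enorm_eq_nnnorm]
    rw [hlint ((measurable_from_prod_countable_left fun i => (hv i).abs).nnnorm.coe_nnreal_ennreal.pow_const p)]
    congr 1
    rw [ENNReal.ofReal_sum_of_nonneg (fun i _ => integral_nonneg fun x => Real.rpow_nonneg (abs_nonneg _) _)]
    refine Finset.sum_congr rfl fun i _ => ?_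
    simp only [Real.nnnorm_abs]
    exact lint_eq_ofReal_integral hp0 (hvL i)
  have keyU : eLpNorm U pe μ'
      = (ENNReal.ofReal (∑ i, ∫ x, |u i x| ^ p ∂P)) ^ (1/p) := by
    have hUL : ∀ i, MemLp (u i) pe P := by
      intro i
      refine MemLp.of_le ((hVint i).add (memLp_const c)) (hu i).aestronglyMeasurable ?_
      filter_upwards with x
      rw [Real.norm_eq_abs]
      calc |u i x| ≤ |v i x| + c := hbound i x
      _ ≤ |(|v i x| + c)| := le_abs_self _
      _ = ‖|v i x| + c‖ := (Real.norm_eq_abs _).symm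
    rw [eLpNorm_eq_lintegral_rpow_enorm_toReal hpe0 hpet, hpetR]; simp only [enorm_eq_nnnorm]
    rw [hlint (hUm.nnnorm.coe_nnreal_ennreal.pow_const p)]
    congr 1
    rw [ENNReal.ofReal_sum_of_nonneg (fun i _ => integral_nonneg fun x => Real.rpow_nonneg (abs_nonneg _) _)]
    exact Finset.sum_congr rfl fun i _ => lint_eq_ofReal_integral hp0 (hUL i)
  have keyC : eLpNorm (fun _ : α × Fin T => c) pe μ'
      = ENNReal.ofReal c * (T : ℝ≥0∞) ^ (1/p) := by
    rw [eLpNorm_const c hpe0 hμ'ne, hpetR, hμ'univ]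
    congr 1
    rw [← ofReal_norm, Real.norm_eq_abs, abs_of_nonneg hc]
  -- combine in ℝ≥0∞ then pass to ℝ
  have main : (ENNReal.ofReal (∑ i, ∫ x, |u i x| ^ p ∂P)) ^ (1/p)
      ≤ (ENNReal.ofReal (∑ i, ∫ x, |v i x| ^ p ∂P)) ^ (1/p)
        + ENNReal.ofReal c * (T : ℝ≥0∞) ^ (1/p) := by
    rw [← keyU, ← keyV, ← keyC]
    exact le_trans step1 step2
  have hfin : ((ENNReal.ofReal (∑ i, ∫ x, |v i x| ^ p ∂P)) ^ (1/p)
        + ENNReal.ofReal c * (T : ℝ≥0∞) ^ (1/p)) ≠ ⊤ := by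
    refine ENNReal.add_ne_top.2 ⟨?_, ?_⟩
    · exact (ENNReal.rpow_ne_top_of_nonneg (by positivity) ENNReal.ofReal_ne_top)
    · exact ENNReal.mul_ne_top ENNReal.ofReal_ne_top
        (ENNReal.rpow_ne_top_of_nonneg (by positivity) (ENNReal.natCast_ne_top T))
  have := ENNReal.toReal_mono hfin main
  have hsumu : 0 ≤ ∑ i, ∫ x, |u i x| ^ p ∂P :=
    Finset.sum_nonneg fun i _ => integral_nonneg fun x => Real.rpow_nonneg (abs_nonneg _) _
  have hsumv : 0 ≤ ∑ i, ∫ x, |v i x| ^ p ∂P :=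
    Finset.sum_nonneg fun i _ => integral_nonneg fun x => Real.rpow_nonneg (abs_nonneg _) _
  rw [ENNReal.toReal_add
      (ENNReal.rpow_ne_top_of_nonneg (by positivity) ENNReal.ofReal_ne_top)
      (ENNReal.mul_ne_top ENNReal.ofReal_ne_top
        (ENNReal.rpow_ne_top_of_nonneg (by positivity) (ENNReal.natCast_ne_top T))),
    ENNReal.toReal_mul] at this
  simp only [← ENNReal.toReal_rpow, ENNReal.toReal_ofReal hsumu,
    ENNReal.toReal_ofReal hsumv, ENNReal.toReal_ofReal hc] at this
  simpa using this

-- PIECE 2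
lemma Tpow_le {p : ℝ} (hp : 1 ≤ p) (T : ℕ) : ((T:ℝ)) ^ (1/p) ≤ (T:ℝ) := by
  have hp0 : 0 < p := lt_of_lt_of_le one_pos hp
  rcases Nat.eq_zero_or_pos T with h | h
  · subst h
    rw [Nat.cast_zero, Real.zero_rpow (by positivity : (0:ℝ) < 1/p).ne']
  · have h1 : (1:ℝ) ≤ (T:ℝ) := by exact_mod_cast h
    calc ((T:ℝ)) ^ (1/p) ≤ ((T:ℝ)) ^ (1:ℝ) :=
          Real.rpow_le_rpow_of_exponent_le h1 (by rw [div_le_one₀ hp0]; exact hp)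
    _ = (T:ℝ) := Real.rpow_one _

section MAIN
variable {T : ℕ} {p r δ : ℝ} {Z : Fin T → PathSp T → ℝ}
variable (P : Measure (PathSp T)) [IsProbabilityMeasure P]

lemma memℒp_Ymap_coord (hPm : FiniteMoment p P)
    (hZmeas : ∀ t : Fin T, Measurable[FX T ((t:ℕ)+1)] (Z t))
    (hZLp : ∀ t : Fin T, MemLp (Z t) (ENNReal.ofReal p) P)
    (hδ : 0 < δ) (hr : 0 ≤ r) (t : Fin T) :
    MemLp (fun x => Ymap T r Z δ x t) (ENNReal.ofReal p) P := by
  have hg : MemLp (fun x : PathSp T => ‖x t‖ + (r * ‖Z t x‖ + 2*δ)) (ENNReal.ofReal p) P :=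
    (hPm t).norm.add (((hZLp t).norm.const_mul r).add (memLp_const _))
  refine MemLp.of_le hg ((Ymap_meas hZmeas).eval).aestronglyMeasurable ?_
  filter_upwards with x
  have h1 := Ymap_dist' (Z := Z) hδ hr x t
  have h2 : |Ymap T r Z δ x t| - |x t| ≤ |Ymap T r Z δ x t - x t| :=
    abs_sub_abs_le_abs_sub _ _
  rw [abs_sub_comm] at h2
  have hnn : 0 ≤ ‖x t‖ + (r * ‖Z t x‖ + 2*δ) := by positivity
  simp only [Real.norm_eq_abs] at *
  rw [abs_of_nonneg hnn]
  linarith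

lemma cost_le_AW (hp : 1 < p) (hPm : FiniteMoment p P)
    (hZmeas : ∀ t : Fin T, Measurable[FX T ((t:ℕ)+1)] (Z t))
    (hZLp : ∀ t : Fin T, MemLp (Z t) (ENNReal.ofReal p) P)
    (hZp : ∑ t : Fin T, ∫ x, |Z t x| ^ p ∂P ≤ 1)
    (hr : 0 < r) (hδ : 0 < δ) :
    AW T p P (P.map (Ymap T r Z δ)) ≤ r + 2*δ*(T:ℝ) := by
  have hp0 : 0 < p := lt_trans one_pos hp
  have he : Measurable fun x : PathSp T => (x, Ymap T r Z δ x) :=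
    measurable_id.prodMk (Ymap_meas hZmeas)
  set e := fun x : PathSp T => (x, Ymap T r Z δ x) with hedef
  set π := P.map e with hπdef
  have hasm : ∀ t : Fin T, AEStronglyMeasurable (fun z : PathSp T × PathSp T => |z.1 t - z.2 t| ^ p) π :=
    fun t => ((((measurable_fst.eval).sub (measurable_snd.eval)).abs.pow
      measurable_const)).aestronglyMeasurable
  have hmem : (∑ t : Fin T, ∫ z, |z.1 t - z.2 t| ^ p ∂π) ^ (1/p) ∈
      { s | ∃ π' : Measure (PathSp T × PathSp T), IsCoupling π' P (P.map (Ymap T r Z δ)) ∧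
        Bicausal T π' ∧ s = (∑ t : Fin T, ∫ z, |z.1 t - z.2 t| ^ p ∂π') ^ (1 / p) } := by
    refine ⟨π, ⟨?_, ?_⟩, bicausal_graph P hZmeas hδ, rfl⟩
    · rw [hπdef, Measure.map_map measurable_fst he]
      exact Measure.map_id
    · rw [hπdef, Measure.map_map measurable_snd he]
      rfl
  have hbdd : BddBelow { s | ∃ π' : Measure (PathSp T × PathSp T),
      IsCoupling π' P (P.map (Ymap T r Z δ)) ∧ Bicausal T π' ∧
      s = (∑ t : Fin T, ∫ z, |z.1 t - z.2 t| ^ p ∂π') ^ (1 / p) } := by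
    refine ⟨0, fun s hs => ?_⟩
    obtain ⟨π', _, _, hse⟩ := hs
    rw [hse]
    exact Real.rpow_nonneg (Finset.sum_nonneg fun t _ =>
      integral_nonneg fun z => Real.rpow_nonneg (abs_nonneg _) _) _
  have h1 : AW T p P (P.map (Ymap T r Z δ)) ≤
      (∑ t : Fin T, ∫ z, |z.1 t - z.2 t| ^ p ∂π) ^ (1/p) := csInf_le hbdd hmem
  have hchg : (∑ t : Fin T, ∫ z, |z.1 t - z.2 t| ^ p ∂π)
      = ∑ t : Fin T, ∫ x, |x t - Ymap T r Z δ x t| ^ p ∂P := by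
    refine Finset.sum_congr rfl fun t _ => ?_
    rw [hπdef, integral_map he.aemeasurable (hasm t)]
  have hmink : (∑ t : Fin T, ∫ x, |x t - Ymap T r Z δ x t| ^ p ∂P) ^ (1/p) ≤
      (∑ t : Fin T, ∫ x, |r * Z t x| ^ p ∂P) ^ (1/p) + (2*δ) * (T:ℝ) ^ (1/p) := by
    refine sum_rpow_minkowski P hp.le _ _ (2*δ) (by positivity)
      (fun t => ((measurable_pi_apply t).sub ((Ymap_meas hZmeas).eval)))
      (fun t => ((hZmeas t).mono FX_le_pi le_rfl).const_mul r)
      (fun t => (hZLp t).const_mul r) (fun t x => ?_)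
    rw [abs_mul, abs_of_nonneg hr.le]
    exact Ymap_dist' hδ hr.le x t
  have hZterm : (∑ t : Fin T, ∫ x, |r * Z t x| ^ p ∂P) ^ (1/p) ≤ r := by
    have heq : ∀ t : Fin T, ∫ x, |r * Z t x| ^ p ∂P = r^p * ∫ x, |Z t x| ^ p ∂P := by
      intro t
      rw [← integral_const_mul]
      refine integral_congr_ae (Filter.Eventually.of_forall fun x => ?_)
      show |r * Z t x| ^ p = r^p * |Z t x|^p
      rw [abs_mul, Real.mul_rpow (abs_nonneg _) (abs_nonneg _), abs_of_nonneg hr.le]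
    have hsum : ∑ t : Fin T, ∫ x, |r * Z t x| ^ p ∂P
        = r^p * ∑ t : Fin T, ∫ x, |Z t x| ^ p ∂P := by
      rw [Finset.mul_sum]; exact Finset.sum_congr rfl fun t _ => heq t
    rw [hsum]
    have hZnn : 0 ≤ ∑ t : Fin T, ∫ x, |Z t x| ^ p ∂P :=
      Finset.sum_nonneg fun t _ => integral_nonneg fun x => Real.rpow_nonneg (abs_nonneg _) _
    rw [Real.mul_rpow (by positivity) hZnn]
    have h2 : (r^p)^(1/p) = r := by
      rw [← Real.rpow_mul hr.le, mul_one_div_cancel (ne_of_gt hp0), Real.rpow_one]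
    rw [h2]
    calc r * (∑ t : Fin T, ∫ x, |Z t x| ^ p ∂P) ^ (1/p) ≤ r * 1 := by
          refine mul_le_mul_of_nonneg_left ?_ hr.le
          exact Real.rpow_le_one hZnn hZp (by positivity)
    _ = r := mul_one r
  calc AW T p P (P.map (Ymap T r Z δ)) ≤
      (∑ t : Fin T, ∫ z, |z.1 t - z.2 t| ^ p ∂π) ^ (1/p) := h1
  _ = (∑ t : Fin T, ∫ x, |x t - Ymap T r Z δ x t| ^ p ∂P) ^ (1/p) := by rw [hchg]
  _ ≤ (∑ t : Fin T, ∫ x, |r * Z t x| ^ p ∂P) ^ (1/p) + (2*δ) * (T:ℝ) ^ (1/p) := hmink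
  _ ≤ r + (2*δ) * (T:ℝ) ^ (1/p) := by linarith
  _ ≤ r + 2*δ*(T:ℝ) := by
      have := Tpow_le hp.le T
      nlinarith

lemma cost_le_Wp (hp : 1 < p)
    (hZmeas : ∀ t : Fin T, Measurable[FX T ((t:ℕ)+1)] (Z t))
    (hr : 0 < r) (hδ : 0 < δ) :
    Wp T p (P.map (Ymap T r Z δ)) (P.map fun x => fun t => x t + r * Z t x) ≤
      2*δ*(T:ℝ)^(1/p) := by
  have hp0 : 0 < p := lt_trans one_pos hp
  have hY : Measurable (Ymap T r Z δ) := Ymap_meas hZmeas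
  have hQr : Measurable fun x : PathSp T => fun t : Fin T => x t + r * Z t x :=
    measurable_pi_iff.2 fun t =>
      (measurable_pi_apply t).add (((hZmeas t).mono FX_le_pi le_rfl).const_mul r)
  have he : Measurable fun x : PathSp T =>
      ((Ymap T r Z δ x, fun t : Fin T => x t + r * Z t x) : PathSp T × PathSp T) :=
    hY.prodMk hQr
  set e := fun x : PathSp T =>
    ((Ymap T r Z δ x, fun t : Fin T => x t + r * Z t x) : PathSp T × PathSp T) with hedef
  set π := P.map e with hπdef
  have hasm : ∀ t : Fin T, AEStronglyMeasurable
      (fun z : PathSp T × PathSp T => |z.1 t - z.2 t| ^ p) π :=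
    fun t => ((((measurable_fst.eval).sub (measurable_snd.eval)).abs.pow
      measurable_const)).aestronglyMeasurable
  have hmem : (∑ t : Fin T, ∫ z, |z.1 t - z.2 t| ^ p ∂π) ^ (1/p) ∈
      { s | ∃ π' : Measure (PathSp T × PathSp T),
        IsCoupling π' (P.map (Ymap T r Z δ)) (P.map fun x => fun t => x t + r * Z t x) ∧
        s = (∑ t : Fin T, ∫ z, |z.1 t - z.2 t| ^ p ∂π') ^ (1 / p) } := by
    refine ⟨π, ⟨?_, ?_⟩, rfl⟩
    · rw [hπdef, Measure.map_map measurable_fst he]; rfl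
    · rw [hπdef, Measure.map_map measurable_snd he]; rfl
  have hbdd : BddBelow { s | ∃ π' : Measure (PathSp T × PathSp T),
      IsCoupling π' (P.map (Ymap T r Z δ)) (P.map fun x => fun t => x t + r * Z t x) ∧
      s = (∑ t : Fin T, ∫ z, |z.1 t - z.2 t| ^ p ∂π') ^ (1 / p) } := by
    refine ⟨0, fun s hs => ?_⟩
    obtain ⟨π', _, hse⟩ := hs
    rw [hse]
    exact Real.rpow_nonneg (Finset.sum_nonneg fun t _ =>
      integral_nonneg fun z => Real.rpow_nonneg (abs_nonneg _) _) _
  have h1 : Wp T p (P.map (Ymap T r Z δ)) (P.map fun x => fun t => x t + r * Z t x) ≤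
      (∑ t : Fin T, ∫ z, |z.1 t - z.2 t| ^ p ∂π) ^ (1/p) := csInf_le hbdd hmem
  have hchg : (∑ t : Fin T, ∫ z, |z.1 t - z.2 t| ^ p ∂π)
      = ∑ t : Fin T, ∫ x, |Ymap T r Z δ x t - (x t + r * Z t x)| ^ p ∂P := by
    refine Finset.sum_congr rfl fun t _ => ?_
    rw [hπdef, integral_map he.aemeasurable (hasm t)]
  have hmink : (∑ t : Fin T, ∫ x, |Ymap T r Z δ x t - (x t + r * Z t x)| ^ p ∂P) ^ (1/p) ≤
      (∑ t : Fin T, ∫ x, |(0:ℝ)| ^ p ∂P) ^ (1/p) + (2*δ) * (T:ℝ) ^ (1/p) := by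
    refine sum_rpow_minkowski P hp.le _ (fun _ _ => (0:ℝ)) (2*δ) (by positivity)
      (fun t => (hY.eval.sub ((measurable_pi_apply t).add
        (((hZmeas t).mono FX_le_pi le_rfl).const_mul r))))
      (fun t => measurable_const) (fun t => memLp_const 0) (fun t x => ?_)
    rw [abs_zero]
    have := Ymap_dist (r := r) (Z := Z) hδ x t
    linarith
  have hzero : (∑ t : Fin T, ∫ x, |(0:ℝ)| ^ p ∂P) ^ (1/p) = 0 := by
    have : ∀ t : Fin T, ∫ x, |(0:ℝ)| ^ p ∂P = (0:ℝ) := fun t => by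
      simp [abs_zero, Real.zero_rpow (ne_of_gt hp0)]
    rw [Finset.sum_congr rfl fun t _ => this t, Finset.sum_const, smul_zero,
      Real.zero_rpow (by positivity : (0:ℝ) < 1/p).ne']
  calc Wp T p (P.map (Ymap T r Z δ)) (P.map fun x => fun t => x t + r * Z t x) ≤
      (∑ t : Fin T, ∫ z, |z.1 t - z.2 t| ^ p ∂π) ^ (1/p) := h1
  _ = (∑ t : Fin T, ∫ x, |Ymap T r Z δ x t - (x t + r * Z t x)| ^ p ∂P) ^ (1/p) := by rw [hchg]
  _ ≤ (∑ t : Fin T, ∫ x, |(0:ℝ)| ^ p ∂P) ^ (1/p) + (2*δ) * (T:ℝ) ^ (1/p) := hmink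
  _ = 2*δ*(T:ℝ)^(1/p) := by rw [hzero]; ring

end MAIN


/-- adapted Wasserstein bound for adapted additive perturbations:
for Q^r the law of X + rZ, there are Q^{r,n} with 𝒜𝒲_p(P,Q^{r,n}) ≤ r + T/n and
𝒲_p(Q^{r,n}, Q^r) ≤ T^{1/p}/n; in particular Q^{r,n} ∈ B_{r+ε}(P) for n large. -/
theorem adapted_perturbation_AW_bound
    (T : ℕ) (p : ℝ) (hp : 1 < p)
    (P : Measure (PathSp T)) [IsProbabilityMeasure P] (hPm : FiniteMoment p P)
    (Z : Fin T → PathSp T → ℝ)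
    (hZmeas : ∀ t : Fin T, Measurable[FX T ((t : ℕ) + 1)] (Z t))
    (hZLp : ∀ t : Fin T, MemLp (Z t) (ENNReal.ofReal p) P)
    (hZp : ∑ t : Fin T, ∫ x, |Z t x| ^ p ∂P ≤ 1)
    (r : ℝ) (hr : 0 < r) :
    ∃ Qs : ℕ → Measure (PathSp T),
      (∀ n : ℕ, 0 < n →
        IsProbabilityMeasure (Qs n) ∧ FiniteMoment p (Qs n) ∧
        AW T p P (Qs n) ≤ r + T / n ∧
        Wp T p (Qs n) (P.map fun x => fun t => x t + r * Z t x) ≤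
          (T : ℝ) ^ (1 / p) / n) ∧
      ∀ ε > (0:ℝ), ∃ N : ℕ, ∀ n ≥ N, Qs n ∈ AWball T p P (r + ε) := by
  have hp0 : 0 < p := lt_trans one_pos hp
  set Qs : ℕ → Measure (PathSp T) :=
    fun n => P.map (Ymap T r Z (((2 * max n 1 : ℕ) : ℝ))⁻¹) with hQs
  have key : ∀ n : ℕ, 0 < n → IsProbabilityMeasure (Qs n) ∧ FiniteMoment p (Qs n) ∧
      AW T p P (Qs n) ≤ r + T / n ∧
      Wp T p (Qs n) (P.map fun x => fun t => x t + r * Z t x) ≤ (T:ℝ)^(1/p)/n := by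
    intro n hn
    have hmax : max n 1 = n := max_eq_left hn
    have hnpos : (0:ℝ) < ((2 * max n 1 : ℕ) : ℝ) := by
      rw [hmax]
      exact_mod_cast Nat.pos_of_ne_zero (by omega)
    have hδ : (0:ℝ) < (((2 * max n 1 : ℕ) : ℝ))⁻¹ := inv_pos.2 hnpos
    have h2δ : 2 * (((2 * max n 1 : ℕ) : ℝ))⁻¹ = 1 / (n:ℝ) := by
      rw [hmax]
      have hn' : ((n:ℝ)) ≠ 0 := by exact_mod_cast hn.ne'
      push_cast
      field_simp
    refine ⟨Measure.isProbabilityMeasure_map (Ymap_meas hZmeas).aemeasurable, ?_, ?_, ?_⟩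
    · intro t
      refine (memLp_map_measure_iff (measurable_pi_apply t).aestronglyMeasurable
        (Ymap_meas hZmeas).aemeasurable).2 ?_
      exact memℒp_Ymap_coord P hPm hZmeas hZLp hδ hr.le t
    · calc AW T p P (Qs n) ≤ r + 2*(((2 * max n 1 : ℕ) : ℝ))⁻¹*(T:ℝ) :=
            cost_le_AW P hp hPm hZmeas hZLp hZp hr hδ
      _ = r + T / n := by rw [h2δ]; ring
    · calc Wp T p (Qs n) (P.map fun x => fun t => x t + r * Z t x) ≤
            2*(((2 * max n 1 : ℕ) : ℝ))⁻¹*(T:ℝ)^(1/p) :=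
            cost_le_Wp P hp hZmeas hr hδ
      _ = (T:ℝ)^(1/p)/n := by rw [h2δ]; ring
  refine ⟨Qs, key, ?_⟩
  intro ε hε
  refine ⟨max 1 ⌈(T:ℝ)/ε⌉₊, fun n hn => ?_⟩
  have hn1 : 0 < n := lt_of_lt_of_le one_pos (le_trans (le_max_left _ _) hn)
  obtain ⟨h1, h2, h3, -⟩ := key n hn1
  refine ⟨h1, h2, h3.trans ?_⟩
  have hc : ⌈(T:ℝ)/ε⌉₊ ≤ n := le_trans (le_max_right _ _) hn
  have hceil : (T:ℝ)/ε ≤ n := le_trans (Nat.le_ceil _) (by exact_mod_cast hc)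
  have hne : (0:ℝ) < n := by exact_mod_cast hn1
  have hfin : (T:ℝ)/n ≤ ε := by
    rw [div_le_iff₀ hne]
    rw [div_le_iff₀ hε] at hceil
    nlinarith
  linarith

end
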